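/- In the numerical semigroup S' = ⟨12, 14, 16, 35⟩ relative to S = ⟨12, 16⟩, the Apéry set Ap(S', S) equals {0, 14, 35, 49}, and every element of S' has a unique representation as s + w with s ∈ S and w ∈ {0, 14, 35, 49}. -/

import Mathlib

/-- The Apéry set of `S'` with respect to `S`. -/
def apery (S' S : Set ℕ) : Set ℕ :=
  {w | w ∈ S' ∧ ∀ s ∈ S, s ≠ 0 → ∀ w' ∈ S', w ≠ s + w'}

lemma memS (x : ℕ) : x ∈ AddSubmonoid.closure ({12, 16} : Set ℕ) ↔ ∃ a b, x = 12*a + 16*b := by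
  constructor
  · intro hx
    induction hx using AddSubmonoid.closure_induction with
    | mem y hy =>
      simp only [Set.mem_insert_iff, Set.mem_singleton_iff] at hy
      rcases hy with rfl | rfl
      · exact ⟨1, 0, by ring⟩
      · exact ⟨0, 1, by ring⟩
    | zero => exact ⟨0, 0, by ring⟩
    | add x y hx hy ihx ihy =>
      obtain ⟨a, b, rfl⟩ := ihx
      obtain ⟨c, d, rfl⟩ := ihy
      exact ⟨a + c, b + d, by ring⟩
  · rintro ⟨a, b, rfl⟩
    have h12 : (12:ℕ) ∈ AddSubmonoid.closure ({12, 16} : Set ℕ) :=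
      AddSubmonoid.subset_closure (by simp)
    have h16 : (16:ℕ) ∈ AddSubmonoid.closure ({12, 16} : Set ℕ) :=
      AddSubmonoid.subset_closure (by simp)
    have := add_mem (AddSubmonoid.nsmul_mem _ h12 a) (AddSubmonoid.nsmul_mem _ h16 b)
    simpa [smul_eq_mul, mul_comm] using this

lemma memS' (x : ℕ) : x ∈ AddSubmonoid.closure ({12, 14, 16, 35} : Set ℕ) ↔
    ∃ a b c d, x = 12*a + 14*b + 16*c + 35*d := by
  constructor
  · intro hx
    induction hx using AddSubmonoid.closure_induction with
    | mem y hy =>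
      simp only [Set.mem_insert_iff, Set.mem_singleton_iff] at hy
      rcases hy with rfl | rfl | rfl | rfl
      · exact ⟨1, 0, 0, 0, by ring⟩
      · exact ⟨0, 1, 0, 0, by ring⟩
      · exact ⟨0, 0, 1, 0, by ring⟩
      · exact ⟨0, 0, 0, 1, by ring⟩
    | zero => exact ⟨0, 0, 0, 0, by ring⟩
    | add x y hx hy ihx ihy =>
      obtain ⟨a, b, c, d, rfl⟩ := ihx
      obtain ⟨a', b', c', d', rfl⟩ := ihy
      exact ⟨a + a', b + b', c + c', d + d', by ring⟩
  · rintro ⟨a, b, c, d, rfl⟩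
    have h12 : (12:ℕ) ∈ AddSubmonoid.closure ({12, 14, 16, 35} : Set ℕ) :=
      AddSubmonoid.subset_closure (by simp)
    have h14 : (14:ℕ) ∈ AddSubmonoid.closure ({12, 14, 16, 35} : Set ℕ) :=
      AddSubmonoid.subset_closure (by simp)
    have h16 : (16:ℕ) ∈ AddSubmonoid.closure ({12, 14, 16, 35} : Set ℕ) :=
      AddSubmonoid.subset_closure (by simp)
    have h35 : (35:ℕ) ∈ AddSubmonoid.closure ({12, 14, 16, 35} : Set ℕ) :=
      AddSubmonoid.subset_closure (by simp)
    have := add_mem (add_mem (add_mem (AddSubmonoid.nsmul_mem _ h12 a)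
      (AddSubmonoid.nsmul_mem _ h14 b)) (AddSubmonoid.nsmul_mem _ h16 c))
      (AddSubmonoid.nsmul_mem _ h35 d)
    simpa [smul_eq_mul, mul_comm] using this

/-- Explicit decomposition. -/
lemma decomp (x : ℕ) (hx : x ∈ AddSubmonoid.closure ({12, 14, 16, 35} : Set ℕ)) :
    ∃ s w, s ∈ AddSubmonoid.closure ({12, 16} : Set ℕ) ∧ w ∈ ({0, 14, 35, 49} : Set ℕ) ∧
      x = s + w := by
  obtain ⟨a, b, c, d, rfl⟩ := (memS' x).1 hx
  -- write d = 2e + f, then b' = b + e = 2q + r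
  obtain ⟨e, f, hf, hd⟩ : ∃ e f, f ≤ 1 ∧ d = 2*e + f := ⟨d / 2, d % 2, by omega, by omega⟩
  obtain ⟨q, r, hr, hb⟩ : ∃ q r, r ≤ 1 ∧ b + e = 2*q + r := ⟨(b+e) / 2, (b+e) % 2, by omega, by omega⟩
  refine ⟨12*(a + q + 2*e) + 16*(c + q + 2*e), 14*r + 35*f, (memS _).2 ⟨_, _, rfl⟩, ?_, by omega⟩
  simp only [Set.mem_insert_iff, Set.mem_singleton_iff]
  interval_cases r <;> interval_cases f <;> simp

/-- `Ap(⟨12,14,16,35⟩, ⟨12,16⟩) = {0, 14, 35, 49}` and every element of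
`⟨12,14,16,35⟩` has a unique representation `s + w` with `s ∈ ⟨12,16⟩`, `w ∈ {0,14,35,49}`. -/
theorem apery_glue_example :
    apery (AddSubmonoid.closure ({12, 14, 16, 35} : Set ℕ) : Set ℕ)
        (AddSubmonoid.closure ({12, 16} : Set ℕ) : Set ℕ)
      = ({0, 14, 35, 49} : Set ℕ) ∧
    ∀ x ∈ AddSubmonoid.closure ({12, 14, 16, 35} : Set ℕ), ∃! p : ℕ × ℕ,
      p.1 ∈ AddSubmonoid.closure ({12, 16} : Set ℕ) ∧
      p.2 ∈ ({0, 14, 35, 49} : Set ℕ) ∧ x = p.1 + p.2 := by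
  constructor
  · ext w
    simp only [apery, Set.mem_setOf_eq, Set.mem_insert_iff, Set.mem_singleton_iff]
    constructor
    · rintro ⟨hw, hap⟩
      obtain ⟨s, w0, hs, hw0, rfl⟩ := decomp w hw
      have hw0' : w0 ∈ AddSubmonoid.closure ({12, 14, 16, 35} : Set ℕ) := by
        simp only [Set.mem_insert_iff, Set.mem_singleton_iff] at hw0
        rcases hw0 with rfl | rfl | rfl | rfl
        · exact (memS' _).2 ⟨0,0,0,0, by ring⟩
        · exact (memS' _).2 ⟨0,1,0,0, by ring⟩
        · exact (memS' _).2 ⟨0,0,0,1, by ring⟩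
        · exact (memS' _).2 ⟨0,1,0,1, by ring⟩
      by_cases hs0 : s = 0
      · subst hs0
        simpa using hw0
      · exact absurd rfl (hap s hs hs0 w0 hw0')
    · intro hw
      constructor
      · rcases hw with rfl | rfl | rfl | rfl
        · exact (memS' _).2 ⟨0,0,0,0, by ring⟩
        · exact (memS' _).2 ⟨0,1,0,0, by ring⟩
        · exact (memS' _).2 ⟨0,0,0,1, by ring⟩
        · exact (memS' _).2 ⟨0,1,0,1, by ring⟩
      · intro s hs hs0 w' hw'
        obtain ⟨a, b, rfl⟩ := (memS s).1 hs
        obtain ⟨a', b', c', d', rfl⟩ := (memS' w').1 hw'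
        rcases hw with rfl | rfl | rfl | rfl <;>
          · intro heq
            have h1 : d' ≤ 1 := by omega
            interval_cases d' <;> omega
  · intro x hx
    obtain ⟨s, w, hs, hw, hxe⟩ := decomp x hx
    refine ⟨(s, w), ⟨hs, hw, hxe⟩, ?_⟩
    rintro ⟨s', w'⟩ ⟨hs', hw', hxe'⟩
    obtain ⟨a, b, rfl⟩ := (memS _).1 hs
    obtain ⟨a', b', rfl⟩ := (memS _).1 hs'
    simp only [Set.mem_insert_iff, Set.mem_singleton_iff] at hw hw'
    have : w' = w ∧ 12*a' + 16*b' = 12*a + 16*b := by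
      rcases hw with rfl | rfl | rfl | rfl <;> rcases hw' with rfl | rfl | rfl | rfl <;> omega
    simp only [Prod.mk.injEq]
    exact ⟨this.2, this.1⟩
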